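/- Let (W,S) be an even Coxeter system, t ∈ S, U = { s : m_{st} < ∞ }, and let c : W_U → A be the coloring c(w) = w·ē as above. Suppose w, w' ∈ W_U satisfy c(w) = c(w') and S(w^{-1}w') ∪ {t} is spherical. Then w^{-1}w' ∈ W_{S(w^{-1}w') \ {t}}; in particular w^{-1}w' ∈ W_{U \ {t}}. -/

import Mathlib

open CoxeterSystem

/-- An even Coxeter system: every off-diagonal entry of the Coxeter matrix is
even or infinite (where `0` encodes `∞`). -/
def CoxeterMatrix.IsEven {B : Type*} (M : CoxeterMatrix B) : Prop :=
  ∀ i j : B, i ≠ j → M i j = 0 ∨ Even (M i j)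

/-- The standard parabolic subgroup `W_V` generated by the simple reflections
indexed by `V`. -/
def CoxeterSystem.parabolic {B W : Type*} [Group W] {M : CoxeterMatrix B}
    (cs : CoxeterSystem M W) (V : Set B) : Subgroup W :=
  Subgroup.closure (cs.simple '' V)

/-- `V ⊆ S` is spherical if the parabolic subgroup `W_V` is finite. -/
def CoxeterSystem.IsSpherical {B W : Type*} [Group W] {M : CoxeterMatrix B}
    (cs : CoxeterSystem M W) (V : Set B) : Prop :=
  (cs.parabolic V : Set W).Finite

/-- `S(w)`: the set of generators appearing in a reduced expression for `w`. -/
def CoxeterSystem.lettersOf {B W : Type*} [Group W] {M : CoxeterMatrix B}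
    (cs : CoxeterSystem M W) (w : W) : Set B :=
  {i | ∃ ω : List B, cs.IsReduced ω ∧ cs.wordProd ω = w ∧ i ∈ ω}

/-- The nerve of the Coxeter system is a flag complex: any finite set of
pairwise spherical vertices is spherical. -/
def CoxeterSystem.HasFlagNerve {B W : Type*} [Group W] {M : CoxeterMatrix B}
    (cs : CoxeterSystem M W) : Prop :=
  ∀ T : Finset B, (∀ i ∈ T, ∀ j ∈ T, i ≠ j → cs.IsSpherical {i, j}) →
    cs.IsSpherical (T : Set B)

/-- A family of homomorphisms `g_{UT} : W_U → W` (one for each `T ⊆ S`) sending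
`s ↦ s` for `s ∈ U ∩ T` and `s ↦ e` otherwise, with image inside `W_T`. -/
def IsColoringFamily {B W : Type*} [Group W] {M : CoxeterMatrix B}
    (cs : CoxeterSystem M W) (U : Set B)
    (g : Set B → ((cs.parabolic U) →* W)) : Prop :=
  ∀ T : Set B, (∀ w, g T w ∈ cs.parabolic T) ∧
    (∀ i, ∀ hi : i ∈ U, i ∈ T →
      g T ⟨cs.simple i, Subgroup.subset_closure (Set.mem_image_of_mem _ hi)⟩ = cs.simple i) ∧
    (∀ i, ∀ hi : i ∈ U, i ∉ T →
      g T ⟨cs.simple i, Subgroup.subset_closure (Set.mem_image_of_mem _ hi)⟩ = 1)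

/-- Two vertices `w, w'` of `W_U` have the same color `c(w) = c(w')`: for every
spherical `T` containing `t`, the cosets `g_{UT}(w)W_{T∖{t}}` and
`g_{UT}(w')W_{T∖{t}}` agree. -/
def SameColor {B W : Type*} [Group W] {M : CoxeterMatrix B}
    (cs : CoxeterSystem M W) (t : B) (U : Set B)
    (g : Set B → ((cs.parabolic U) →* W)) (w w' : cs.parabolic U) : Prop :=
  ∀ T : Set B, cs.IsSpherical T → t ∈ T →
    (QuotientGroup.mk (g T w) : W ⧸ cs.parabolic (T \ {t})) = QuotientGroup.mk (g T w')


section Aux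

variable {B W : Type*} [Group W] {M : CoxeterMatrix B} (cs : CoxeterSystem M W)

/-- In an even Coxeter system, the map sending simples in `U` to themselves and
the other simples to `1` satisfies the lifting condition. -/
lemma aux_isLiftable (heven : ∀ i j : B, i ≠ j → M i j = 0 ∨ Even (M i j))
    (U : Set B) [DecidablePred (· ∈ U)] :
    M.IsLiftable (fun i => if i ∈ U then cs.simple i else 1) := by
  intro i j
  by_cases hij : i = j
  · subst hij
    by_cases hi : i ∈ U <;> simp [hi, M.diagonal, cs.simple_sq]
  have hpow : ∀ k : B, (cs.simple k) ^ M i j = 1 := by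
    intro k
    rcases heven i j hij with h0 | ⟨r, hr⟩
    · simp [h0]
    · rw [hr, ← two_mul, pow_mul, cs.simple_sq, one_pow]
  by_cases hi : i ∈ U <;> by_cases hj : j ∈ U <;>
    simp [hi, hj, cs.simple_mul_simple_pow, hpow]

lemma aux_retraction_wordProd (heven : ∀ i j : B, i ≠ j → M i j = 0 ∨ Even (M i j))
    (U : Set B) [DecidablePred (· ∈ U)] (ω : List B) :
    cs.lift ⟨_, aux_isLiftable cs heven U⟩ (cs.wordProd ω) =
      cs.wordProd (ω.filter (fun i => decide (i ∈ U))) := by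
  induction ω with
  | nil => simp
  | cons i ω ih =>
    rw [cs.wordProd_cons, map_mul, ih, cs.lift_apply_simple]
    by_cases hi : i ∈ U
    · rw [List.filter_cons_of_pos (by simpa), cs.wordProd_cons, if_pos hi]
    · rw [List.filter_cons_of_neg (by simpa), if_neg hi, one_mul]

lemma aux_retraction_fix (heven : ∀ i j : B, i ≠ j → M i j = 0 ∨ Even (M i j))
    (U : Set B) [DecidablePred (· ∈ U)] {v : W} (hv : v ∈ cs.parabolic U) :
    cs.lift ⟨_, aux_isLiftable cs heven U⟩ v = v := by
  induction hv using Subgroup.closure_induction with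
  | mem x hx =>
    obtain ⟨i, hi, rfl⟩ := hx
    rw [cs.lift_apply_simple, if_pos hi]
  | one => simp
  | mul x y hx hy ihx ihy => rw [map_mul, ihx, ihy]
  | inv x hx ihx => rw [map_inv, ihx]

/-- Letters of a reduced word of an element of `W_U` lie in `U`. -/
lemma aux_support (heven : ∀ i j : B, i ≠ j → M i j = 0 ∨ Even (M i j))
    {U : Set B} {v : W} (hv : v ∈ cs.parabolic U) {ω : List B}
    (hred : cs.IsReduced ω) (hπ : cs.wordProd ω = v) {i : B} (hi : i ∈ ω) :
    i ∈ U := by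
  classical
  by_contra hiU
  have h1 : cs.wordProd (ω.filter (fun j => decide (j ∈ U))) = v := by
    rw [← aux_retraction_wordProd cs heven U ω, hπ, aux_retraction_fix cs heven U hv]
  have hlt : (ω.filter (fun j => decide (j ∈ U))).length < ω.length := by
    have hle := List.length_filter_le (fun j => decide (j ∈ U)) ω
    rcases lt_or_eq_of_le hle with h | h
    · exact h
    · exact absurd ((List.length_filter_eq_length_iff.mp h) i hi) (by simpa)
  have h2 := cs.length_wordProd_le (ω.filter (fun j => decide (j ∈ U)))
  rw [h1] at h2
  have h3 : cs.length v = ω.length := by rw [← hπ]; exact hred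
  omega

lemma aux_lettersOf_subset (heven : ∀ i j : B, i ≠ j → M i j = 0 ∨ Even (M i j))
    {U : Set B} {v : W} (hv : v ∈ cs.parabolic U) :
    cs.lettersOf v ⊆ U := by
  rintro i ⟨ω, hred, hπ, hi⟩
  exact aux_support cs heven hv hred hπ hi

end Aux


lemma aux_main {B W : Type*} [Group W] {M : CoxeterMatrix B}
    (cs : CoxeterSystem M W) (heven : M.IsEven) (t : B) (U : Set B)
    (g : Set B → ((cs.parabolic U) →* W))
    (hg : IsColoringFamily cs U g)
    (w w' : cs.parabolic U)
    (hc : SameColor cs t U g w w')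
    (hsph : cs.IsSpherical (cs.lettersOf ((w : W)⁻¹ * (w' : W)) ∪ {t})) :
    (w : W)⁻¹ * (w' : W) ∈ cs.parabolic (cs.lettersOf ((w : W)⁻¹ * (w' : W)) \ {t}) ∧
    (w : W)⁻¹ * (w' : W) ∈ cs.parabolic (U \ {t}) := by
  classical
  have hvU : (w : W)⁻¹ * (w' : W) ∈ cs.parabolic U := mul_mem (inv_mem w.2) w'.2
  obtain ⟨ω, hred, hπ⟩ := cs.exists_reduced_word' ((w : W)⁻¹ * (w' : W))
  have hlet : ∀ i ∈ ω, i ∈ cs.lettersOf ((w : W)⁻¹ * (w' : W)) :=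
    fun i hi => ⟨ω, hred, hπ.symm, hi⟩
  have hletU : ∀ i ∈ ω, i ∈ U := fun i hi => aux_support cs heven hvU hred hπ.symm hi
  -- evaluation of `g T` on elements written as words with letters in `U ∩ T`
  have heval : ∀ T : Set B, ∀ (ω : List B), (∀ i ∈ ω, i ∈ U ∧ i ∈ T) →
      ∀ (V : cs.parabolic U), (V : W) = cs.wordProd ω → g T V = cs.wordProd ω := by
    intro T ω
    induction ω with
    | nil =>
      intro _ V hV
      have : V = 1 := Subtype.ext (by simpa using hV)
      rw [this, map_one, cs.wordProd_nil]
    | cons i ω ih =>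
      intro hmem V hV
      obtain ⟨hiU, hiT⟩ := hmem i (List.mem_cons_self (a := i) (l := ω))
      have hV' : (((⟨cs.simple i, Subgroup.subset_closure (Set.mem_image_of_mem _ hiU)⟩ :
          cs.parabolic U)⁻¹ * V : cs.parabolic U) : W) = cs.wordProd ω := by
        have : (((⟨cs.simple i, Subgroup.subset_closure (Set.mem_image_of_mem _ hiU)⟩ :
            cs.parabolic U)⁻¹ * V : cs.parabolic U) : W) = (cs.simple i)⁻¹ * (V : W) := rfl
        rw [this, hV, cs.wordProd_cons, inv_mul_cancel_left]
      have hrec := ih (fun j hj => hmem j (List.mem_cons_of_mem i hj)) _ hV'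
      have hVs : V = (⟨cs.simple i, Subgroup.subset_closure (Set.mem_image_of_mem _ hiU)⟩ :
          cs.parabolic U) * ((⟨cs.simple i, Subgroup.subset_closure
            (Set.mem_image_of_mem _ hiU)⟩ : cs.parabolic U)⁻¹ * V) := by group
      rw [hVs, map_mul, hrec, (hg T).2.1 i hiU hiT, cs.wordProd_cons]
  have hgv : g (cs.lettersOf ((w : W)⁻¹ * (w' : W)) ∪ {t}) (w⁻¹ * w') = (w : W)⁻¹ * (w' : W) := by
    have hcoe : ((w⁻¹ * w' : cs.parabolic U) : W) = cs.wordProd ω := by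
      push_cast
      exact hπ
    rw [heval (cs.lettersOf ((w : W)⁻¹ * (w' : W)) ∪ {t}) ω (fun i hi => ⟨hletU i hi, Or.inl (hlet i hi)⟩) (w⁻¹ * w') hcoe, ← hπ]
  have hcol := hc (cs.lettersOf ((w : W)⁻¹ * (w' : W)) ∪ {t}) hsph (Or.inr rfl)
  rw [QuotientGroup.eq] at hcol
  have hvmem : (w : W)⁻¹ * (w' : W) ∈
      cs.parabolic ((cs.lettersOf ((w : W)⁻¹ * (w' : W)) ∪ {t}) \ {t}) := by
    have h2 : (g (cs.lettersOf ((w : W)⁻¹ * (w' : W)) ∪ {t}) w)⁻¹ *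
        g (cs.lettersOf ((w : W)⁻¹ * (w' : W)) ∪ {t}) w' = (w : W)⁻¹ * (w' : W) := by
      rw [← map_inv, ← map_mul, hgv]
    rwa [h2] at hcol
  have hTd : (cs.lettersOf ((w : W)⁻¹ * (w' : W)) ∪ {t}) \ {t} =
      cs.lettersOf ((w : W)⁻¹ * (w' : W)) \ {t} := by
    rw [Set.union_diff_distrib, Set.diff_self, Set.union_empty]
  rw [hTd] at hvmem
  refine ⟨hvmem, ?_⟩
  exact Subgroup.closure_mono
    (Set.image_mono (Set.diff_subset_diff_left (aux_lettersOf_subset cs heven hvU))) hvmem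

/-- key step of Lemma 3.6: if `w, w' ∈ W_U` have the same color
and `S(w⁻¹w') ∪ {t}` is spherical, then `w⁻¹w' ∈ W_{S(w⁻¹w') ∖ {t}}`; in
particular `w⁻¹w' ∈ W_{U∖{t}}`. -/
theorem statement10 {B W : Type*} [Group W] {M : CoxeterMatrix B}
    (cs : CoxeterSystem M W) (heven : M.IsEven) (t : B)
    (g : Set B → ((cs.parabolic {s | M s t ≠ 0}) →* W))
    (hg : IsColoringFamily cs {s | M s t ≠ 0} g)
    (w w' : cs.parabolic {s | M s t ≠ 0})
    (hc : SameColor cs t {s | M s t ≠ 0} g w w')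
    (hsph : cs.IsSpherical (cs.lettersOf ((w : W)⁻¹ * (w' : W)) ∪ {t})) :
    (w : W)⁻¹ * (w' : W) ∈ cs.parabolic (cs.lettersOf ((w : W)⁻¹ * (w' : W)) \ {t}) ∧
    (w : W)⁻¹ * (w' : W) ∈ cs.parabolic ({s | M s t ≠ 0} \ {t}) := by
  exact aux_main cs heven t {s | M s t ≠ 0} g hg w w' hc hsph
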